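/- For an irreducible reversible Markov chain P on finite X, a set A ⊂ X with P^A = P restricted to A^c × A^c irreducible aperiodic, and λ_A the largest eigenvalue of P^A: for all n ≥ 0 and starting from stationarity, P_π(T_A > n) ≤ π(A^c) λ_A^n. -/

import Mathlib

open Matrix Finset Classical

/-- `P(T_A > n)`: probability that the chain with kernel `K` and initial distribution `μ`
avoids the set `A` up to time `n`, as an explicit sum over trajectories. -/
noncomputable def hitAvoid {X : Type*} [Fintype X] (K : Matrix X X ℝ) (μ : X → ℝ)
    (A : Set X) (n : ℕ) : ℝ :=
  ∑ f : Fin (n + 1) → X,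
    if ∀ k, f k ∉ A then μ (f 0) * ∏ k : Fin n, K (f k.castSucc) (f k.succ) else 0

section Aux

variable {ι : Type*} [Fintype ι] [DecidableEq ι]

lemma pathSum' (M : Matrix ι ι ℝ) :
    ∀ (n : ℕ) (ν : ι → ℝ),
      ∑ g : Fin (n + 1) → ι, ν (g 0) * ∏ k : Fin n, M (g k.castSucc) (g k.succ)
        = ∑ j, (ν ᵥ* (M ^ n)) j := by
  intro n
  induction n with
  | zero =>
    intro ν
    simp only [pow_zero, Matrix.vecMul_one]
    rw [Fintype.sum_equiv (Equiv.funUnique (Fin 1) ι) _ (fun x => ν x)]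
    intro g
    simp
  | succ n ih =>
    intro ν
    set e := (Fin.consEquiv (fun _ : Fin (n + 1 + 1) => ι)) with he
    rw [← Equiv.sum_comp e (fun g => ν (g 0) * ∏ k : Fin (n+1), M (g k.castSucc) (g k.succ))]
    rw [Fintype.sum_prod_type]
    have key : ∀ (x : ι) (g' : Fin (n+1) → ι),
        ν ((e (x, g')) 0) * ∏ k : Fin (n+1), M ((e (x, g')) k.castSucc) ((e (x, g')) k.succ)
          = ν x * M x (g' 0) * ∏ k : Fin n, M (g' k.castSucc) (g' k.succ) := by
      intro x g'
      have h0 : e (x, g') = Fin.cons x g' := rfl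
      rw [h0, Fin.prod_univ_succ]
      simp only [Fin.castSucc_zero, Fin.cons_zero, Fin.cons_succ, ← Fin.succ_castSucc]
      ring_nf
    simp only [key]
    have : ∀ g' : Fin (n+1) → ι,
        ∑ x, ν x * M x (g' 0) * ∏ k : Fin n, M (g' k.castSucc) (g' k.succ)
          = (ν ᵥ* M) (g' 0) * ∏ k : Fin n, M (g' k.castSucc) (g' k.succ) := by
      intro g'
      rw [← Finset.sum_mul]
      rfl
    rw [Finset.sum_comm]
    simp only [this]
    rw [ih (ν ᵥ* M)]
    rw [pow_succ']
    rw [Matrix.vecMul_vecMul]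

lemma unitary_quad (U : Matrix ι ι ℝ) (d : ι → ℝ) (f : ι → ℝ) :
    f ⬝ᵥ ((U * diagonal d * star U) *ᵥ f) = ∑ i, d i * ((f ᵥ* U) i) ^ 2 := by
  rw [Matrix.dotProduct_mulVec, ← Matrix.vecMul_vecMul, ← Matrix.vecMul_vecMul,
    Matrix.star_eq_conjTranspose, Matrix.conjTranspose_eq_transpose_of_trivial,
    Matrix.vecMul_transpose, dotProduct_comm, Matrix.dotProduct_mulVec]
  simp only [dotProduct, Matrix.vecMul_diagonal]
  exact Finset.sum_congr rfl (fun i _ => by ring)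

lemma unitary_norm {U : Matrix ι ι ℝ} (hU : U ∈ Matrix.unitaryGroup ι ℝ) (f : ι → ℝ) :
    (f ᵥ* U) ⬝ᵥ (f ᵥ* U) = f ⬝ᵥ f := by
  nth_rewrite 2 [← Matrix.mulVec_transpose]
  rw [← Matrix.conjTranspose_eq_transpose_of_trivial, ← Matrix.star_eq_conjTranspose,
    Matrix.dotProduct_mulVec, Matrix.vecMul_vecMul, Matrix.mem_unitaryGroup_iff.mp hU,
    Matrix.vecMul_one]

lemma herm_pow_quad {S : Matrix ι ι ℝ} (hS : S.IsHermitian) (n : ℕ) (f : ι → ℝ) :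
    f ⬝ᵥ ((S ^ n) *ᵥ f)
      = ∑ i, (hS.eigenvalues i) ^ n * ((f ᵥ* (hS.eigenvectorUnitary : Matrix ι ι ℝ)) i) ^ 2 := by
  have hpow : S ^ n = (hS.eigenvectorUnitary : Matrix ι ι ℝ)
      * diagonal (fun i => hS.eigenvalues i ^ n)
      * star (hS.eigenvectorUnitary : Matrix ι ι ℝ) := by
    set u : (Matrix ι ι ℝ)ˣ := Unitary.toUnits (hS.eigenvectorUnitary) with hu
    have h1 : S = (hS.eigenvectorUnitary : Matrix ι ι ℝ) * diagonal (hS.eigenvalues)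
        * star (hS.eigenvectorUnitary : Matrix ι ι ℝ) := by
      have := hS.spectral_theorem
      rwa [RCLike.ofReal_real_eq_id, Function.id_comp] at this
    have h2 : S = (u : Matrix ι ι ℝ) * diagonal hS.eigenvalues
        * ((u⁻¹ : (Matrix ι ι ℝ)ˣ) : Matrix ι ι ℝ) := h1.trans rfl
    conv_lhs => rw [h2]
    rw [Units.conj_pow, Matrix.diagonal_pow]
    rfl
  rw [hpow, unitary_quad]

lemma herm_quad_pow_le {S : Matrix ι ι ℝ} (hS : S.IsHermitian) {lam : ℝ}
    (habs : ∀ i, |hS.eigenvalues i| ≤ lam) (n : ℕ) (f : ι → ℝ) :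
    f ⬝ᵥ ((S ^ n) *ᵥ f) ≤ lam ^ n * (f ⬝ᵥ f) := by
  rw [herm_pow_quad hS n f]
  have hff : f ⬝ᵥ f = ∑ i, ((f ᵥ* (hS.eigenvectorUnitary : Matrix ι ι ℝ)) i) ^ 2 := by
    rw [← unitary_norm (hS.eigenvectorUnitary).2 f]
    simp [dotProduct, sq]
  rw [hff, Finset.mul_sum]
  apply Finset.sum_le_sum
  intro i _
  apply mul_le_mul_of_nonneg_right _ (sq_nonneg _)
  calc (hS.eigenvalues i) ^ n ≤ |(hS.eigenvalues i) ^ n| := le_abs_self _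
    _ = |hS.eigenvalues i| ^ n := by rw [abs_pow]
    _ ≤ lam ^ n := pow_le_pow_left₀ (abs_nonneg _) (habs i) n

lemma herm_rayleigh {S : Matrix ι ι ℝ} (hS : S.IsHermitian) {lam : ℝ}
    (hle : ∀ i, hS.eigenvalues i ≤ lam) (v : ι → ℝ) :
    v ⬝ᵥ (S *ᵥ v) ≤ lam * (v ⬝ᵥ v) := by
  have := herm_pow_quad hS 1 v
  rw [pow_one] at this
  rw [this]
  have hff : v ⬝ᵥ v = ∑ i, ((v ᵥ* (hS.eigenvectorUnitary : Matrix ι ι ℝ)) i) ^ 2 := by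
    rw [← unitary_norm (hS.eigenvectorUnitary).2 v]
    simp [dotProduct, sq]
  rw [hff, Finset.mul_sum]
  apply Finset.sum_le_sum
  intro i _
  simpa [pow_one] using mul_le_mul_of_nonneg_right (hle i) (sq_nonneg _)

lemma eig_abs_le {S : Matrix ι ι ℝ} (hS : S.IsHermitian) (hnn : ∀ i j, 0 ≤ S i j) {lam : ℝ}
    (hle : ∀ i, hS.eigenvalues i ≤ lam) (i : ι) : |hS.eigenvalues i| ≤ lam := by
  set v : ι → ℝ := ⇑(hS.eigenvectorBasis i) with hv
  have hmv : S *ᵥ v = hS.eigenvalues i • v := hS.mulVec_eigenvectorBasis i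
  have hvv : v ⬝ᵥ v = 1 := by
    have hnorm : ‖hS.eigenvectorBasis i‖ = 1 := hS.eigenvectorBasis.orthonormal.1 i
    have hinner : (inner ℝ (hS.eigenvectorBasis i) (hS.eigenvectorBasis i) : ℝ) = 1 := by
      rw [real_inner_self_eq_norm_sq, hnorm]; norm_num
    rw [← hinner, PiLp.inner_apply]
    simp [dotProduct, v, sq]
  have hquad : v ⬝ᵥ (S *ᵥ v) = hS.eigenvalues i := by
    rw [hmv, dotProduct_smul, smul_eq_mul, hvv, mul_one]
  rw [abs_le]
  refine ⟨?_, hle i⟩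
  have habs : -(v ⬝ᵥ (S *ᵥ v)) ≤ (fun j => |v j|) ⬝ᵥ (S *ᵥ fun j => |v j|) := by
    simp only [dotProduct, Matrix.mulVec, Finset.mul_sum, ← Finset.sum_neg_distrib]
    apply Finset.sum_le_sum
    intro a _
    apply Finset.sum_le_sum
    intro b _
    calc -(v a * (S a b * v b)) ≤ |v a * (S a b * v b)| := neg_le_abs _
      _ = |v a| * (S a b * |v b|) := by
          rw [abs_mul, abs_mul, abs_of_nonneg (hnn a b)]
  have hray : (fun j => |v j|) ⬝ᵥ (S *ᵥ fun j => |v j|) ≤ lam := by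
    have := herm_rayleigh hS hle (fun j => |v j|)
    have habs2 : (fun j => |v j|) ⬝ᵥ (fun j => |v j|) = v ⬝ᵥ v := by
      simp [dotProduct, abs_mul_abs_self]
    rw [habs2, hvv, mul_one] at this
    exact this
  have := habs.trans hray
  rw [hquad] at this
  linarith

lemma diag_quad (d : ι → ℝ) (hd : ∀ i, d i ≠ 0) (M : Matrix ι ι ℝ) :
    d ⬝ᵥ ((diagonal d * M * diagonal (fun i => (d i)⁻¹)) *ᵥ d)
      = ∑ j, ((fun i => d i * d i) ᵥ* M) j := by
  simp only [Matrix.mul_diagonal, Matrix.diagonal_mul, Matrix.mulVec, Matrix.vecMul,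
    dotProduct, Finset.mul_sum]
  rw [Finset.sum_comm]
  apply Finset.sum_congr rfl
  intro i _
  apply Finset.sum_congr rfl
  intro j _
  rw [mul_assoc (d j * M j i), inv_mul_cancel₀ (hd i), mul_one, ← mul_assoc]

end Aux

lemma hitAvoid_eq {m : ℕ} (P : Matrix (Fin m) (Fin m) ℝ) (π : Fin m → ℝ)
    (A : Finset (Fin m)) (n : ℕ) :
    hitAvoid P π (↑A) n = ∑ g : Fin (n + 1) → {x : Fin m // x ∉ A},
      π (g 0).1 * ∏ k : Fin n, P (g k.castSucc).1 (g k.succ).1 := by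
  classical
  unfold hitAvoid
  simp only [Finset.mem_coe]
  rw [← Finset.sum_filter]
  rw [Finset.sum_subtype (p := fun f : Fin (n+1) → Fin m => ∀ k, f k ∉ A)
    (Finset.univ.filter (fun f : Fin (n+1) → Fin m => ∀ k, f k ∉ A))
    (by intro f; simp) (fun f => π (f 0) * ∏ k : Fin n, P (f k.castSucc) (f k.succ))]
  exact (Fintype.sum_equiv
    (Equiv.subtypePiEquivPi (p := fun (_ : Fin (n+1)) (x : Fin m) => x ∉ A)).symm
    (fun g : Fin (n + 1) → {x : Fin m // x ∉ A} =>
      π (g 0).1 * ∏ k : Fin n, P (g k.castSucc).1 (g k.succ).1)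
    (fun f : {f : Fin (n+1) → Fin m // ∀ k, f k ∉ A} =>
      π (f.1 0) * ∏ k : Fin n, P (f.1 k.castSucc) (f.1 k.succ))
    (fun g => rfl)).symm

/-- for a reversible irreducible chain `P` on a finite state space, `A` a set
such that the restriction `P^A` of `P` to `Aᶜ × Aᶜ` is irreducible and aperiodic (primitive),
and `λ_A` the largest eigenvalue of `P^A`: `P_π(T_A > n) ≤ π(Aᶜ) λ_A ^ n` for all `n`. -/
theorem stmt5 {m : ℕ} (P : Matrix (Fin m) (Fin m) ℝ) (π : Fin m → ℝ)
    (A : Finset (Fin m))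
    (hP0 : ∀ x y, 0 ≤ P x y) (hP1 : ∀ x, ∑ y, P x y = 1)
    (hπpos : ∀ x, 0 < π x) (hπ1 : ∑ x, π x = 1)
    (hstat : π ᵥ* P = π)
    (hrev : ∀ x y, π x * P x y = π y * P y x)
    (hirr : ∀ x y, ∃ n, 0 < (P ^ n) x y)
    (PA : Matrix {x : Fin m // x ∉ A} {x : Fin m // x ∉ A} ℝ)
    (hPA : ∀ i j, PA i j = P i.1 j.1)
    (hprim : ∃ k, ∀ i j, 0 < (PA ^ k) i j)
    (lamA : ℝ)
    (hEig : lamA ∈ spectrum ℝ PA)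
    (hMax : ∀ μ ∈ spectrum ℝ PA, μ ≤ lamA)
    (n : ℕ) :
    hitAvoid P π (↑A) n ≤ (∑ x ∈ Aᶜ, π x) * lamA ^ n := by
  classical
  set d : {x : Fin m // x ∉ A} → ℝ := fun i => Real.sqrt (π i.1) with hdDef
  have hdpos : ∀ i, 0 < d i := fun i => Real.sqrt_pos.mpr (hπpos i.1)
  have hdne : ∀ i, d i ≠ 0 := fun i => (hdpos i).ne'
  have hdd : ∀ i, d i * d i = π i.1 := fun i => Real.mul_self_sqrt (hπpos i.1).le
  set S : Matrix {x : Fin m // x ∉ A} {x : Fin m // x ∉ A} ℝ :=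
    diagonal d * PA * diagonal (fun i => (d i)⁻¹) with hSDef
  -- the diagonal unit
  have hmul1 : diagonal d * diagonal (fun i => (d i)⁻¹) = 1 := by
    rw [Matrix.diagonal_mul_diagonal]
    convert Matrix.diagonal_one using 2
    funext i
    exact mul_inv_cancel₀ (hdne i)
  have hmul2 : diagonal (fun i => (d i)⁻¹) * diagonal d = 1 := by
    rw [Matrix.diagonal_mul_diagonal]
    convert Matrix.diagonal_one using 2
    funext i
    exact inv_mul_cancel₀ (hdne i)
  set u : (Matrix {x : Fin m // x ∉ A} {x : Fin m // x ∉ A} ℝ)ˣ :=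
    ⟨diagonal d, diagonal (fun i => (d i)⁻¹), hmul1, hmul2⟩ with huDef
  -- S is Hermitian
  have hSherm : S.IsHermitian := by
    rw [Matrix.IsHermitian]
    ext i j
    rw [Matrix.conjTranspose_apply]
    simp only [hSDef, Matrix.mul_diagonal, Matrix.diagonal_mul, star_trivial]
    rw [hPA, hPA]
    have hrevij : π j.1 * P j.1 i.1 = π i.1 * P i.1 j.1 := hrev j.1 i.1
    have hi := hdpos i
    have hj := hdpos j
    field_simp
    calc d j ^ 2 * P j.1 i.1 = (d j * d j) * P j.1 i.1 := by ring
      _ = π j.1 * P j.1 i.1 := by rw [hdd j]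
      _ = π i.1 * P i.1 j.1 := hrevij
      _ = (d i * d i) * P i.1 j.1 := by rw [hdd i]
      _ = d i ^ 2 * P i.1 j.1 := by ring
  -- entries of S are nonnegative
  have hSnn : ∀ i j, 0 ≤ S i j := by
    intro i j
    simp only [hSDef, Matrix.mul_diagonal, Matrix.diagonal_mul]
    rw [hPA]
    have := hP0 i.1 j.1
    have hi := (hdpos i).le
    have hj := hdpos j
    positivity
  -- spectrum transfer
  have hspec : spectrum ℝ S = spectrum ℝ PA := by
    have : S = (u : Matrix _ _ ℝ) * PA * ((u⁻¹ : _ˣ) : Matrix _ _ ℝ) := rfl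
    rw [this]
    exact spectrum.units_conjugate
  have hEigLe : ∀ i, hSherm.eigenvalues i ≤ lamA := by
    intro i
    apply hMax
    rw [← hspec]
    exact hSherm.eigenvalues_mem_spectrum_real i
  have hAbs : ∀ i, |hSherm.eigenvalues i| ≤ lamA := fun i => eig_abs_le hSherm hSnn hEigLe i
  -- rewrite the hitting probability
  rw [hitAvoid_eq P π A n]
  have hstep1 : ∑ g : Fin (n + 1) → {x : Fin m // x ∉ A},
      π (g 0).1 * ∏ k : Fin n, P (g k.castSucc).1 (g k.succ).1
      = ∑ j, ((fun i : {x : Fin m // x ∉ A} => π i.1) ᵥ* (PA ^ n)) j := by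
    rw [← pathSum' PA n (fun i => π i.1)]
    apply Finset.sum_congr rfl
    intro g _
    congr 1
    apply Finset.prod_congr rfl
    intro k _
    rw [hPA]
  rw [hstep1]
  -- identify with the quadratic form
  have hstep2 : ∑ j, ((fun i : {x : Fin m // x ∉ A} => π i.1) ᵥ* (PA ^ n)) j
      = d ⬝ᵥ ((S ^ n) *ᵥ d) := by
    have hpow : S ^ n = diagonal d * (PA ^ n) * diagonal (fun i => (d i)⁻¹) := by
      have h2 : S = (u : Matrix _ _ ℝ) * PA * ((u⁻¹ : _ˣ) : Matrix _ _ ℝ) := rfl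
      rw [h2, Units.conj_pow]
      rfl
    rw [hpow, diag_quad d hdne (PA ^ n)]
    apply Finset.sum_congr rfl
    intro j _
    congr 1
    funext i
    rw [hdd i]
  rw [hstep2]
  have hbound := herm_quad_pow_le hSherm hAbs n d
  have hnorm : d ⬝ᵥ d = ∑ x ∈ Aᶜ, π x := by
    rw [Finset.sum_subtype Aᶜ (fun x => Finset.mem_compl) π]
    simp only [dotProduct]
    exact Finset.sum_congr rfl (fun i _ => hdd i)
  rw [hnorm] at hbound
  linarith [hbound]
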